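/- Let G be a finitely generated residually finite group that is not virtually abelian, such that dc(G/N) ≥ dc_X(G) for every finite-index normal subgroup N (as holds under subexponential growth). Then dc_X(G) = 0. -/

import Mathlib

open Filter Finset

/-- The ball of radius `n` in the word metric on `G` with respect to `X`. -/
def ball {G : Type*} [Group G] (X : Finset G) (n : ℕ) : Set G :=
  {g | ∃ l : List G, l.length ≤ n ∧ (∀ x ∈ l, x ∈ X ∨ x⁻¹ ∈ X) ∧ l.prod = g}

/-- The degree of commutativity of `G` with respect to the finite generating set `X`:
the limsup of the proportions of commuting pairs in balls. -/
noncomputable def dcX {G : Type*} [Group G] (X : Finset G) : ℝ :=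
  limsup (fun n =>
    (Nat.card {p : G × G // p.1 ∈ ball X n ∧ p.2 ∈ ball X n ∧ p.1 * p.2 = p.2 * p.1} : ℝ) /
      (Nat.card (ball X n) : ℝ) ^ 2) atTop

/-- Degree of commutativity of a group (meaningful for finite groups). -/
noncomputable def dc (G : Type*) [Group G] : ℚ :=
  (Nat.card {p : G × G // p.1 * p.2 = p.2 * p.1} : ℚ) / (Nat.card G : ℚ) ^ 2



private lemma comm_inv_left' {G : Type*} [Group G] {a b : G} (h : a * b = b * a) :
    a⁻¹ * b = b * a⁻¹ := by
  have : a⁻¹ * (b * a) * a⁻¹ = a⁻¹ * (a * b) * a⁻¹ := by rw [h]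
  simpa [mul_assoc] using this

private lemma cp_le_mul (Q : Type*) [Group Q] [Finite Q] (M : Subgroup Q) [M.Normal] :
    Nat.card {p : Q × Q // p.1 * p.2 = p.2 * p.1} ≤
      Nat.card {p : ↥M × ↥M // p.1 * p.2 = p.2 * p.1} *
        Nat.card {p : (Q ⧸ M) × (Q ⧸ M) // p.1 * p.2 = p.2 * p.1} := by
  classical
  have : Fintype Q := Fintype.ofFinite Q
  have : Fintype (Q ⧸ M) := Fintype.ofFinite _
  set A : Finset (Q × Q) := univ.filter fun p : Q × Q => p.1 * p.2 = p.2 * p.1 with hA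
  set B : Finset (Q × Q) :=
    univ.filter (fun p : Q × Q => p.1 ∈ M ∧ p.2 ∈ M ∧ p.1 * p.2 = p.2 * p.1) with hB
  set D : Finset ((Q ⧸ M) × (Q ⧸ M)) :=
    univ.filter fun p : (Q ⧸ M) × (Q ⧸ M) => p.1 * p.2 = p.2 * p.1 with hD
  have hcA : Nat.card {p : Q × Q // p.1 * p.2 = p.2 * p.1} = A.card := by
    rw [Nat.card_eq_fintype_card, Fintype.card_subtype]
  have hcD : Nat.card {p : (Q ⧸ M) × (Q ⧸ M) // p.1 * p.2 = p.2 * p.1} = D.card := by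
    rw [Nat.card_eq_fintype_card, Fintype.card_subtype]
  have hcB : Nat.card {p : ↥M × ↥M // p.1 * p.2 = p.2 * p.1} = B.card := by
    have e : {p : ↥M × ↥M // p.1 * p.2 = p.2 * p.1} ≃
        {p : Q × Q // p.1 ∈ M ∧ p.2 ∈ M ∧ p.1 * p.2 = p.2 * p.1} :=
      { toFun := fun x => ⟨((x.1.1 : Q), (x.1.2 : Q)), x.1.1.2, x.1.2.2, by
          show (x.1.1 : Q) * (x.1.2 : Q) = (x.1.2 : Q) * (x.1.1 : Q)
          exact_mod_cast congrArg Subtype.val x.2⟩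
        invFun := fun y => ⟨(⟨y.1.1, y.2.1⟩, ⟨y.1.2, y.2.2.1⟩), Subtype.ext y.2.2.2⟩
        left_inv := fun x => rfl
        right_inv := fun y => rfl }
    rw [Nat.card_congr e, Nat.card_eq_fintype_card, Fintype.card_subtype]
  rw [hcA, hcB, hcD]
  have hmaps : ∀ p ∈ A, ((↑p.1 : Q ⧸ M), (↑p.2 : Q ⧸ M)) ∈ D := by
    intro p hp
    rw [hA, mem_filter] at hp
    rw [hD, mem_filter]
    refine ⟨mem_univ _, ?_⟩
    show (↑p.1 : Q ⧸ M) * ↑p.2 = ↑p.2 * ↑p.1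
    rw [← QuotientGroup.mk_mul, ← QuotientGroup.mk_mul, hp.2]
  rw [Finset.card_eq_sum_card_fiberwise hmaps]
  have hfiber : ∀ w ∈ D,
      (A.filter fun p => ((↑p.1 : Q ⧸ M), (↑p.2 : Q ⧸ M)) = w).card ≤ B.card := by
    intro w _
    set σ : Q → Q := fun v =>
      if h : ∃ u : Q, (↑u : Q ⧸ M) = w.1 ∧ u * v = v * u then h.choose else 1 with hσ
    set τ : Q → Q := fun m =>
      if h : ∃ v : Q, (↑v : Q ⧸ M) = w.2 ∧ m * v = v * m then h.choose else 1 with hτ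
    set f : Q × Q → Q × Q :=
      fun p => ((σ p.2)⁻¹ * p.1, (τ ((σ p.2)⁻¹ * p.1))⁻¹ * p.2) with hf
    apply Finset.card_le_card_of_injOn f
    · intro p hp
      rw [mem_coe, mem_filter, hA, mem_filter] at hp
      obtain ⟨⟨-, hcomm⟩, hw⟩ := hp
      have hw1 : (↑p.1 : Q ⧸ M) = w.1 := congrArg Prod.fst hw
      have hw2 : (↑p.2 : Q ⧸ M) = w.2 := congrArg Prod.snd hw
      have hex1 : ∃ u : Q, (↑u : Q ⧸ M) = w.1 ∧ u * p.2 = p.2 * u := ⟨p.1, hw1, hcomm⟩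
      have hσv : σ p.2 = hex1.choose := by rw [hσ]; exact dif_pos hex1
      obtain ⟨hs1, hs2⟩ := hex1.choose_spec
      rw [← hσv] at hs1 hs2
      have hm1M : (σ p.2)⁻¹ * p.1 ∈ M := by
        rw [← QuotientGroup.eq]
        rw [hs1, hw1]
      have hm1c : ((σ p.2)⁻¹ * p.1) * p.2 = p.2 * ((σ p.2)⁻¹ * p.1) := by
        have h1 : (σ p.2)⁻¹ * p.2 = p.2 * (σ p.2)⁻¹ := comm_inv_left' hs2
        calc ((σ p.2)⁻¹ * p.1) * p.2 = (σ p.2)⁻¹ * (p.1 * p.2) := by rw [mul_assoc]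
          _ = (σ p.2)⁻¹ * (p.2 * p.1) := by rw [hcomm]
          _ = ((σ p.2)⁻¹ * p.2) * p.1 := by rw [mul_assoc]
          _ = (p.2 * (σ p.2)⁻¹) * p.1 := by rw [h1]
          _ = p.2 * ((σ p.2)⁻¹ * p.1) := by rw [mul_assoc]
      set m1 := (σ p.2)⁻¹ * p.1 with hm1
      have hex2 : ∃ v : Q, (↑v : Q ⧸ M) = w.2 ∧ m1 * v = v * m1 := ⟨p.2, hw2, hm1c⟩
      have hτv : τ m1 = hex2.choose := by rw [hτ]; exact dif_pos hex2
      obtain ⟨ht1, ht2⟩ := hex2.choose_spec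
      rw [← hτv] at ht1 ht2
      have hm2M : (τ m1)⁻¹ * p.2 ∈ M := by
        rw [← QuotientGroup.eq, ht1, hw2]
      have hm2c : m1 * ((τ m1)⁻¹ * p.2) = ((τ m1)⁻¹ * p.2) * m1 := by
        have h1 : (τ m1)⁻¹ * m1 = m1 * (τ m1)⁻¹ := comm_inv_left' ht2.symm
        calc m1 * ((τ m1)⁻¹ * p.2) = (m1 * (τ m1)⁻¹) * p.2 := (mul_assoc _ _ _).symm
          _ = ((τ m1)⁻¹ * m1) * p.2 := by rw [h1]
          _ = (τ m1)⁻¹ * (m1 * p.2) := mul_assoc _ _ _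
          _ = (τ m1)⁻¹ * (p.2 * m1) := by rw [hm1c]
          _ = ((τ m1)⁻¹ * p.2) * m1 := (mul_assoc _ _ _).symm
      rw [hB, mem_coe, mem_filter]
      exact ⟨mem_univ _, hm1M, hm2M, hm2c⟩
    · intro p hp q hq hpq
      have h1 : (σ p.2)⁻¹ * p.1 = (σ q.2)⁻¹ * q.1 := congrArg Prod.fst hpq
      have h2 := congrArg Prod.snd hpq
      simp only [hf] at h2
      rw [← h1] at h2
      have hp2 : p.2 = q.2 := mul_left_cancel h2
      rw [hp2] at h1
      have hp1 : p.1 = q.1 := mul_left_cancel h1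
      exact Prod.ext hp1 hp2
  calc ∑ w ∈ D, (A.filter fun p => ((↑p.1 : Q ⧸ M), (↑p.2 : Q ⧸ M)) = w).card
      ≤ ∑ _w ∈ D, B.card := Finset.sum_le_sum hfiber
    _ = D.card * B.card := by rw [Finset.sum_const, smul_eq_mul]
    _ = B.card * D.card := mul_comm _ _


private lemma cp_le_five_eighths (Q : Type*) [Group Q] [Finite Q]
    (hna : ∃ a b : Q, a * b ≠ b * a) :
    8 * Nat.card {p : Q × Q // p.1 * p.2 = p.2 * p.1} ≤ 5 * (Nat.card Q) ^ 2 := by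
  classical
  have : Fintype Q := Fintype.ofFinite Q
  set q := Nat.card Q with hq
  have hqf : q = Fintype.card Q := Nat.card_eq_fintype_card
  set A : Finset (Q × Q) := univ.filter fun p : Q × Q => p.1 * p.2 = p.2 * p.1 with hA
  have hcA : Nat.card {p : Q × Q // p.1 * p.2 = p.2 * p.1} = A.card := by
    rw [Nat.card_eq_fintype_card, Fintype.card_subtype]
  have hmaps : ∀ p ∈ A, Prod.fst p ∈ (univ : Finset Q) := fun p _ => mem_univ _
  have hsum : A.card = ∑ u : Q, (univ.filter fun v : Q => u * v = v * u).card := by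
    rw [Finset.card_eq_sum_card_fiberwise hmaps]
    refine Finset.sum_congr rfl fun u _ => ?_
    refine Finset.card_nbij' Prod.snd (fun v => (u, v)) ?_ ?_ ?_ ?_
    · intro p hp
      simp only [hA, mem_coe, mem_filter, mem_univ, true_and] at hp ⊢
      rw [← hp.2]; exact hp.1
    · intro v hv
      simp only [hA, mem_coe, mem_filter, mem_univ, true_and] at hv ⊢
      exact ⟨hv, trivial⟩
    · intro p hp
      simp only [hA, mem_coe, mem_filter, mem_univ, true_and] at hp
      rw [← hp.2]
    · intro v _; rfl
  have hcent : ∀ u : Q, (univ.filter fun v : Q => u * v = v * u).card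
      = Nat.card (Subgroup.centralizer {u}) := by
    intro u
    rw [Nat.card_eq_fintype_card, Fintype.card_subtype]
    congr 1
    apply Finset.filter_congr
    intro v _
    simp [Subgroup.mem_centralizer_iff, eq_comm]
  have hbig : ∀ u : Q, u ∉ Subgroup.center Q →
      2 * (univ.filter fun v : Q => u * v = v * u).card ≤ q := by
    intro u hu
    rw [hcent]
    set H := Subgroup.centralizer ({u} : Set Q) with hH
    have hne : H ≠ ⊤ := by
      intro htop
      apply hu
      rw [Subgroup.mem_center_iff]
      intro g
      have hg : g ∈ H := htop ▸ Subgroup.mem_top g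
      rw [hH, Subgroup.mem_centralizer_iff] at hg
      exact (hg u (Set.mem_singleton u)).symm
    have h0 : H.index ≠ 0 := Subgroup.index_ne_zero_of_finite
    have h1 : H.index ≠ 1 := fun h => hne (Subgroup.index_eq_one.mp h)
    have hidx : 2 ≤ H.index := by omega
    calc 2 * Nat.card H ≤ H.index * Nat.card H := Nat.mul_le_mul_right _ hidx
      _ = q := by rw [mul_comm, Subgroup.card_mul_index]
  have hZ4 : 4 * Nat.card (Subgroup.center Q) ≤ q := by
    have hnc : ¬ IsCyclic (Q ⧸ Subgroup.center Q) := by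
      intro hc
      obtain ⟨a, b, hab⟩ := hna
      exact hab (commutative_of_cyclic_center_quotient (QuotientGroup.mk' _)
        (le_of_eq (QuotientGroup.ker_mk' _)) a b)
    have hcard : Nat.card (Q ⧸ Subgroup.center Q) = (Subgroup.center Q).index :=
      (Subgroup.index_eq_card _).symm
    have h0 : (Subgroup.center Q).index ≠ 0 := Subgroup.index_ne_zero_of_finite
    have hidx : 4 ≤ (Subgroup.center Q).index := by
      by_contra h
      push_neg at h
      have : (Subgroup.center Q).index = 1 ∨ (Subgroup.center Q).index = 2
          ∨ (Subgroup.center Q).index = 3 := by omega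
      rcases this with h1 | h2 | h3
      · refine hnc ?_
        have : Subsingleton (Q ⧸ Subgroup.center Q) :=
          (Nat.card_eq_one_iff_unique.mp (by rw [hcard, h1])).1
        exact isCyclic_of_subsingleton
      · have : Fact (Nat.Prime 2) := ⟨Nat.prime_two⟩
        exact hnc (isCyclic_of_prime_card (p := 2) (by rw [hcard, h2]))
      · have : Fact (Nat.Prime 3) := ⟨Nat.prime_three⟩
        exact hnc (isCyclic_of_prime_card (p := 3) (by rw [hcard, h3]))
    calc 4 * Nat.card (Subgroup.center Q)
        ≤ (Subgroup.center Q).index * Nat.card (Subgroup.center Q) :=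
          Nat.mul_le_mul_right _ hidx
      _ = q := by rw [mul_comm, Subgroup.card_mul_index]
  set Zf : Finset Q := univ.filter fun u => u ∈ Subgroup.center Q with hZf
  have hZcard : Zf.card = Nat.card (Subgroup.center Q) := by
    rw [Nat.card_eq_fintype_card, Fintype.card_subtype]
  have hsplit : ∑ u : Q, (univ.filter fun v : Q => u * v = v * u).card
      = ∑ u ∈ Zf, (univ.filter fun v : Q => u * v = v * u).card
        + ∑ u ∈ univ.filter (fun u => u ∉ Subgroup.center Q),
            (univ.filter fun v : Q => u * v = v * u).card := by
    rw [hZf, Finset.sum_filter_add_sum_filter_not]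
  have hb1 : ∑ u ∈ Zf, (univ.filter fun v : Q => u * v = v * u).card ≤ Zf.card * q := by
    rw [hqf]
    calc ∑ u ∈ Zf, (univ.filter fun v : Q => u * v = v * u).card
        ≤ ∑ _u ∈ Zf, Fintype.card Q := Finset.sum_le_sum (fun u _ => by
          simpa using Finset.card_filter_le univ _)
      _ = Zf.card * Fintype.card Q := by rw [Finset.sum_const, smul_eq_mul]
  have hb2 : 2 * ∑ u ∈ univ.filter (fun u : Q => u ∉ Subgroup.center Q),
      (univ.filter fun v : Q => u * v = v * u).card
      ≤ (univ.filter (fun u : Q => u ∉ Subgroup.center Q)).card * q := by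
    rw [Finset.mul_sum]
    calc ∑ u ∈ univ.filter (fun u : Q => u ∉ Subgroup.center Q),
          2 * (univ.filter fun v : Q => u * v = v * u).card
        ≤ ∑ _u ∈ univ.filter (fun u : Q => u ∉ Subgroup.center Q), q :=
          Finset.sum_le_sum (fun u hu => hbig u (by simpa using (Finset.mem_filter.mp hu).2))
      _ = _ := by rw [Finset.sum_const, smul_eq_mul]
  have hcards : Zf.card + (univ.filter (fun u : Q => u ∉ Subgroup.center Q)).card = q := by
    rw [hqf, ← Finset.card_univ (α := Q), hZf]
    exact Finset.card_filter_add_card_filter_not _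
  rw [hcA, hsum, hsplit]
  set a := Zf.card
  set b := (univ.filter (fun u : Q => u ∉ Subgroup.center Q)).card
  set S1 := ∑ u ∈ Zf, (univ.filter fun v : Q => u * v = v * u).card
  set S2 := ∑ u ∈ univ.filter (fun u : Q => u ∉ Subgroup.center Q),
      (univ.filter fun v : Q => u * v = v * u).card
  have h4a : 4 * a ≤ q := by rw [hZcard]; exact hZ4
  nlinarith [hb1, hb2, hcards, h4a, sq_nonneg q]

private lemma dc_nonneg (Q : Type*) [Group Q] : 0 ≤ dc Q := by
  unfold dc; positivity

private lemma dc_le_one (Q : Type*) [Group Q] [Finite Q] : dc Q ≤ 1 := by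
  unfold dc
  have hq : 0 < (Nat.card Q : ℚ) := by exact_mod_cast Nat.card_pos
  rw [div_le_one (by positivity)]
  have h : Nat.card {p : Q × Q // p.1 * p.2 = p.2 * p.1} ≤ Nat.card (Q × Q) :=
    Nat.card_le_card_of_injective Subtype.val Subtype.val_injective
  rw [Nat.card_prod] at h
  have := (Nat.cast_le (α := ℚ)).mpr h
  calc (Nat.card {p : Q × Q // p.1 * p.2 = p.2 * p.1} : ℚ)
      ≤ (Nat.card Q * Nat.card Q : ℕ) := this
    _ = (Nat.card Q : ℚ) ^ 2 := by push_cast; ring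

private lemma dc_congr {A B : Type*} [Group A] [Group B] (e : A ≃* B) : dc A = dc B := by
  unfold dc
  have h1 : Nat.card A = Nat.card B := Nat.card_congr e.toEquiv
  have h2 : Nat.card {p : A × A // p.1 * p.2 = p.2 * p.1}
      = Nat.card {p : B × B // p.1 * p.2 = p.2 * p.1} := by
    refine Nat.card_congr (Equiv.subtypeEquiv (Equiv.prodCongr e.toEquiv e.toEquiv) ?_)
    intro p
    show p.1 * p.2 = p.2 * p.1 ↔ e p.1 * e p.2 = e p.2 * e p.1
    rw [← map_mul, ← map_mul]
    exact ⟨fun h => by rw [h], fun h => e.injective h⟩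
  rw [h1, h2]

private lemma dc_le_mul (Q : Type*) [Group Q] [Finite Q] (M : Subgroup Q) [M.Normal] :
    dc Q ≤ dc ↥M * dc (Q ⧸ M) := by
  unfold dc
  have hm : 0 < (Nat.card ↥M : ℚ) := by exact_mod_cast Nat.card_pos
  have hr : 0 < (Nat.card (Q ⧸ M) : ℚ) := by exact_mod_cast Nat.card_pos
  have hcard : (Nat.card Q : ℚ) = (Nat.card ↥M : ℚ) * (Nat.card (Q ⧸ M) : ℚ) := by
    have := Subgroup.card_mul_index M
    rw [Subgroup.index_eq_card] at this
    exact_mod_cast this.symm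
  rw [div_mul_div_comm, hcard, mul_pow]
  rw [div_le_div_iff₀ (by positivity) (by positivity)]
  have h := cp_le_mul Q M
  have h' := (Nat.cast_le (α := ℚ)).mpr h
  push_cast at h' ⊢
  nlinarith [h', sq_nonneg ((Nat.card ↥M : ℚ) * (Nat.card (Q ⧸ M) : ℚ)), hm, hr]

private lemma dc_le_five_eighths (Q : Type*) [Group Q] [Finite Q]
    (hna : ∃ a b : Q, a * b ≠ b * a) : dc Q ≤ 5 / 8 := by
  unfold dc
  have hq : 0 < (Nat.card Q : ℚ) := by exact_mod_cast Nat.card_pos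
  rw [div_le_div_iff₀ (by positivity) (by norm_num)]
  have h := (Nat.cast_le (α := ℚ)).mpr (cp_le_five_eighths Q hna)
  push_cast at h
  linarith

/-- If `G` is a finitely generated residually finite group, not virtually abelian, and
`dc_X(G) ≤ dc(G/N)` for every finite-index normal subgroup `N`, then `dc_X(G) = 0`. -/
theorem dcX_eq_zero (G : Type*) [Group G] (X : Finset G)
    (hX : Subgroup.closure (X : Set G) = ⊤)
    (hres : ∀ g : G, g ≠ 1 → ∃ N : Subgroup G, N.Normal ∧ N.FiniteIndex ∧ g ∉ N)
    (hnva : ¬ ∃ H : Subgroup G, H.FiniteIndex ∧ ∀ a b : H, a * b = b * a)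
    (hquot : ∀ N : Subgroup G, ∀ hN : N.Normal, N.FiniteIndex →
      letI := hN; dcX X ≤ (dc (G ⧸ N) : ℝ)) :
    dcX X = 0 := by
  -- Step 1: quotients with arbitrarily small dc
  have key : ∀ k : ℕ, ∃ N : Subgroup G, ∃ hN : N.Normal, N.FiniteIndex ∧
      (letI := hN; ((dc (G ⧸ N) : ℚ) : ℝ) ≤ (5/8 : ℝ) ^ k) := by
    intro k
    induction k with
    | zero =>
      refine ⟨⊤, inferInstance, inferInstance, ?_⟩
      haveI : Subsingleton (G ⧸ (⊤ : Subgroup G)) := QuotientGroup.subsingleton_quotient_top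
      have h1 : dc (G ⧸ (⊤ : Subgroup G)) ≤ 1 := dc_le_one _
      rw [pow_zero]
      exact_mod_cast h1
    | succ k ih =>
      obtain ⟨N, hN, hFI, hdc⟩ := ih
      haveI := hN; haveI := hFI
      have hNna : ∃ a b : ↥N, a * b ≠ b * a := by
        by_contra h
        push_neg at h
        exact hnva ⟨N, hFI, fun a b => h a b⟩
      obtain ⟨a, b, hab⟩ := hNna
      set d : G := ((a : G) * (b : G))⁻¹ * ((b : G) * (a : G)) with hd_def
      have hd : d ≠ 1 := by
        intro h
        apply hab
        apply Subtype.ext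
        push_cast
        exact inv_mul_eq_one.mp h
      obtain ⟨M, hMn, hMfi, hdM⟩ := hres d hd
      haveI := hMn; haveI := hMfi
      set N' : Subgroup G := N ⊓ M with hN'_def
      haveI hN' : N'.Normal := inferInstance
      haveI hN'fi : N'.FiniteIndex := inferInstance
      haveI : Finite (G ⧸ N') := inferInstance
      set Mb : Subgroup (G ⧸ N') := N.map (QuotientGroup.mk' N') with hMb_def
      haveI hMbn : Mb.Normal := hN.map _ (QuotientGroup.mk'_surjective N')
      have iso : (G ⧸ N') ⧸ Mb ≃* G ⧸ N :=
        QuotientGroup.quotientQuotientEquivQuotient N' N inf_le_left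
      have haMb : QuotientGroup.mk' N' (a : G) ∈ Mb :=
        Subgroup.mem_map.mpr ⟨(a : G), a.2, rfl⟩
      have hbMb : QuotientGroup.mk' N' (b : G) ∈ Mb :=
        Subgroup.mem_map.mpr ⟨(b : G), b.2, rfl⟩
      have hMbna : ∃ x y : ↥Mb, x * y ≠ y * x := by
        refine ⟨⟨_, haMb⟩, ⟨_, hbMb⟩, fun h => ?_⟩
        have h' : QuotientGroup.mk' N' ((a : G)) * QuotientGroup.mk' N' ((b : G))
            = QuotientGroup.mk' N' ((b : G)) * QuotientGroup.mk' N' ((a : G)) :=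
          congrArg Subtype.val h
        rw [← map_mul, ← map_mul] at h'
        have hmem : ((a : G) * (b : G))⁻¹ * ((b : G) * (a : G)) ∈ N' :=
          QuotientGroup.eq.mp h'
        exact hdM (SetLike.le_def.mp inf_le_right hmem)
      have h58 : dc ↥Mb ≤ 5 / 8 := dc_le_five_eighths _ hMbna
      have hmain : dc (G ⧸ N') ≤ dc ↥Mb * dc ((G ⧸ N') ⧸ Mb) := dc_le_mul _ Mb
      have hiso : dc ((G ⧸ N') ⧸ Mb) = dc (G ⧸ N) := dc_congr iso
      refine ⟨N', hN', hN'fi, ?_⟩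
      have hq0 : (0:ℝ) ≤ (dc ((G ⧸ N') ⧸ Mb) : ℝ) := by exact_mod_cast dc_nonneg _
      calc ((dc (G ⧸ N') : ℚ) : ℝ) ≤ ((dc ↥Mb : ℚ) : ℝ) * ((dc ((G ⧸ N') ⧸ Mb) : ℚ) : ℝ) := by
            exact_mod_cast hmain
        _ ≤ (5/8 : ℝ) * ((5/8 : ℝ) ^ k) := by
            apply mul_le_mul ?_ ?_ hq0 (by norm_num)
            · have := (Rat.cast_le (K := ℝ)).mpr h58
              push_cast at this
              exact this
            · rw [hiso]; exact hdc
        _ = (5/8 : ℝ) ^ (k+1) := by rw [pow_succ]; ring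
  -- Step 2: dcX ≤ 0
  have hk : ∀ k : ℕ, dcX X ≤ (5/8 : ℝ) ^ k := by
    intro k
    obtain ⟨N, hN, hFI, hdc⟩ := key k
    exact le_trans (hquot N hN hFI) hdc
  have hle : dcX X ≤ 0 :=
    ge_of_tendsto (tendsto_pow_atTop_nhds_zero_of_lt_one (by norm_num) (by norm_num))
      (Eventually.of_forall hk)
  -- Step 3: dcX ≥ 0
  have hge : 0 ≤ dcX X := by
    set f : ℕ → ℝ := fun n =>
      (Nat.card {p : G × G // p.1 ∈ ball X n ∧ p.2 ∈ ball X n ∧ p.1 * p.2 = p.2 * p.1} : ℝ) /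
        (Nat.card (ball X n) : ℝ) ^ 2 with hf
    have hf0 : ∀ n, 0 ≤ f n := by intro n; rw [hf]; positivity
    have hf1 : ∀ n, f n ≤ 1 := by
      intro n
      rw [hf]
      by_cases hb : Nat.card (ball X n) = 0
      · simp [hb]
      · obtain ⟨hne, hfin⟩ := Nat.card_ne_zero.mp hb
        haveI := hfin
        have hinj : Nat.card {p : G × G // p.1 ∈ ball X n ∧ p.2 ∈ ball X n ∧ p.1 * p.2 = p.2 * p.1}
            ≤ Nat.card (↥(ball X n) × ↥(ball X n)) := by
          apply Nat.card_le_card_of_injective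
            (fun p => ((⟨p.1.1, p.2.1⟩ : ball X n), (⟨p.1.2, p.2.2.1⟩ : ball X n)))
          intro x y h
          have h1 : x.1.1 = y.1.1 := congrArg (Subtype.val ∘ Prod.fst) h
          have h2 : x.1.2 = y.1.2 := congrArg (Subtype.val ∘ Prod.snd) h
          exact Subtype.ext (Prod.ext h1 h2)
        rw [Nat.card_prod] at hinj
        have hpos : 0 < (Nat.card (ball X n) : ℝ) := by
          exact_mod_cast Nat.pos_of_ne_zero hb
        rw [div_le_one (by positivity)]
        calc (Nat.card {p : G × G // p.1 ∈ ball X n ∧ p.2 ∈ ball X n ∧ p.1 * p.2 = p.2 * p.1} : ℝ)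
            ≤ ((Nat.card (ball X n) * Nat.card (ball X n) : ℕ) : ℝ) := by exact_mod_cast hinj
          _ = (Nat.card (ball X n) : ℝ) ^ 2 := by push_cast; ring
    unfold dcX
    exact Filter.le_limsup_of_frequently_le (Frequently.of_forall hf0)
      (Filter.isBoundedUnder_of ⟨1, hf1⟩)
  linarith
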